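/- Let f be twice continuously differentiable on I = [a,b], and assume that f, f′ and f″ do not vanish anywhere on I. Let 0 < δ < (b−a)/2 and put J = [a+δ, b−δ]. Then sup_{x ∈ J} |f′(x)| < δ^{−1} · sup_{x ∈ I} |f(x)|. -/

import Mathlib

open Set

/-- A continuous nonvanishing function on an interval has constant sign. -/
lemma sign_const_aux {a b : ℝ} {F : ℝ → ℝ} (hc : ContinuousOn F (Icc a b))
    (hne : ∀ x ∈ Icc a b, F x ≠ 0) :
    (∀ x ∈ Icc a b, 0 < F x) ∨ (∀ x ∈ Icc a b, F x < 0) := by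
  by_contra hcon
  push_neg at hcon
  obtain ⟨⟨u, hu, hu'⟩, ⟨v, hv, hv'⟩⟩ := hcon
  have huv : uIcc u v ⊆ Icc a b := uIcc_subset_Icc hu hv
  have h0 : (0 : ℝ) ∈ uIcc (F u) (F v) := by
    rw [mem_uIcc]
    exact Or.inl ⟨hu', hv'⟩
  obtain ⟨c, hc1, hc2⟩ := intermediate_value_uIcc (hc.mono huv) h0
  exact hne c (huv hc1) hc2

/-- If `f` is `C²` on `[a,b]` and `f, f′, f″` do not vanish on `[a,b]`, then on
`J = [a+δ, b−δ]` one has `‖f′|_J‖ < δ⁻¹·‖f‖`. -/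
theorem first_deriv_bound (a b δ : ℝ) (f : ℝ → ℝ)
    (hf : ContDiffOn ℝ 2 f (Icc a b))
    (hf0 : ∀ x ∈ Icc a b, f x ≠ 0)
    (hf1 : ∀ x ∈ Icc a b, iteratedDerivWithin 1 f (Icc a b) x ≠ 0)
    (hf2 : ∀ x ∈ Icc a b, iteratedDerivWithin 2 f (Icc a b) x ≠ 0)
    (hδ0 : 0 < δ) (hδ : δ < (b - a) / 2) :
    ∀ x ∈ Icc (a + δ) (b - δ),
      |iteratedDerivWithin 1 f (Icc a b) x| <
        δ⁻¹ * sSup ((fun t => |f t|) '' Icc a b) := by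
  have hab : a < b := by linarith
  set s := Icc a b with hsdef
  set g := iteratedDerivWithin 1 f s with hgdef
  set h2 := iteratedDerivWithin 2 f s with hh2def
  have hunique : UniqueDiffOn ℝ s := uniqueDiffOn_Icc hab
  have hfc : ContinuousOn f s := hf.continuousOn
  have hgeq : ∀ x ∈ s, g x = derivWithin f s x := fun x hx =>
    congrFun iteratedDerivWithin_one x
  have hgC : ContDiffOn ℝ 1 (derivWithin f s) s := hf.derivWithin hunique (by norm_num)
  have hgc : ContinuousOn g s := hgC.continuousOn.congr hgeq
  have hh2c : ContinuousOn h2 s :=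
    hf.continuousOn_iteratedDerivWithin (by norm_num) hunique
  -- derivative facts at interior points
  have hf' : ∀ x ∈ Ioo a b, HasDerivAt f (g x) x := by
    intro x hx
    have hxs : x ∈ s := Ioo_subset_Icc_self hx
    have hd := ((hf.differentiableOn (by norm_num)) x hxs).hasDerivWithinAt
    rw [← hgeq x hxs] at hd
    exact hd.hasDerivAt (Icc_mem_nhds hx.1 hx.2)
  have hg' : ∀ x ∈ Ioo a b, HasDerivAt g (h2 x) x := by
    intro x hx
    have hxs : x ∈ s := Ioo_subset_Icc_self hx
    have hd := ((hgC.differentiableOn (by norm_num)) x hxs).hasDerivWithinAt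
    have hd2 : HasDerivAt (derivWithin f s) (derivWithin (derivWithin f s) s x) x :=
      hd.hasDerivAt (Icc_mem_nhds hx.1 hx.2)
    have heq : g =ᶠ[nhds x] derivWithin f s :=
      Filter.eventuallyEq_of_mem (Icc_mem_nhds hx.1 hx.2) hgeq
    have hval : h2 x = derivWithin (derivWithin f s) s x := by
      rw [hh2def, iteratedDerivWithin_succ]
      exact derivWithin_congr hgeq (hgeq x hxs)
    rw [hval]
    exact hd2.congr_of_eventuallyEq heq
  -- constant signs
  have hsf := sign_const_aux hfc hf0
  have hsg := sign_const_aux hgc hf1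
  have hsh := sign_const_aux hh2c hf2
  -- sup bound
  set M := sSup ((fun t => |f t|) '' s) with hMdef
  have hbdd : BddAbove ((fun t => |f t|) '' s) :=
    (isCompact_Icc.image_of_continuousOn hfc.abs).bddAbove
  have hM : ∀ t ∈ s, |f t| ≤ M := fun t ht => le_csSup hbdd ⟨t, ht, rfl⟩
  have hsub : ∀ y ∈ s, ∀ z ∈ s, |f y - f z| ≤ M := by
    intro y hy z hz
    have h1 := hM y hy
    have h2' := hM z hz
    have h3 := le_abs_self (f y)
    have h4 := le_abs_self (f z)
    have h5 := neg_abs_le (f y)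
    have h6 := neg_abs_le (f z)
    rcases hsf with hp | hn
    · have hy' := hp y hy; have hz' := hp z hz
      rw [abs_sub_le_iff]; constructor <;> linarith
    · have hy' := hn y hy; have hz' := hn z hz
      rw [abs_sub_le_iff]; constructor <;> linarith
  -- MVT helpers
  have fm : ∀ u v : ℝ, a ≤ u → u < v → v ≤ b →
      ∃ c ∈ Ioo u v, (v - u) * g c = f v - f u := by
    intro u v h1 h2' h3
    obtain ⟨c, hc, hce⟩ := exists_hasDerivAt_eq_slope f g h2'
      (hfc.mono (Icc_subset_Icc h1 h3))
      (fun t ht => hf' t ⟨lt_of_le_of_lt h1 ht.1, lt_of_lt_of_le ht.2 h3⟩)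
    refine ⟨c, hc, ?_⟩
    have hne : v - u ≠ 0 := sub_ne_zero.mpr (ne_of_gt h2')
    rw [hce]
    field_simp
  have gm : ∀ u v : ℝ, a ≤ u → u < v → v ≤ b →
      ∃ d ∈ Ioo u v, (v - u) * h2 d = g v - g u := by
    intro u v h1 h2' h3
    obtain ⟨d, hd, hde⟩ := exists_hasDerivAt_eq_slope g h2 h2'
      (hgc.mono (Icc_subset_Icc h1 h3))
      (fun t ht => hg' t ⟨lt_of_le_of_lt h1 ht.1, lt_of_lt_of_le ht.2 h3⟩)
    refine ⟨d, hd, ?_⟩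
    have hne : v - u ≠ 0 := sub_ne_zero.mpr (ne_of_gt h2')
    rw [hde]
    field_simp
  -- main argument
  intro x hx
  obtain ⟨hx1, hx2⟩ := hx
  have hxs : x ∈ s := ⟨by linarith, by linarith⟩
  suffices H : ∃ c ∈ s, ∃ y ∈ s, ∃ z ∈ s, |g x| < |g c| ∧ δ * g c = f y - f z by
    obtain ⟨c, hc, y, hy, z, hz, hlt, he⟩ := H
    have habs : δ * |g c| = |f y - f z| := by
      rw [← he, abs_mul, abs_of_pos hδ0]
    have hle := hsub y hy z hz
    rw [inv_mul_eq_div, lt_div_iff₀ hδ0]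
    nlinarith
  have hR : a ≤ x := by linarith
  have hR2 : x < x + δ := by linarith
  have hR3 : x + δ ≤ b := by linarith
  have hL : a ≤ x - δ := by linarith
  have hL2 : x - δ < x := by linarith
  have hL3 : x ≤ b := by linarith
  rcases hsg with hgp | hgn <;> rcases hsh with hhp | hhn
  · -- g > 0, h2 > 0 : use right interval, g increasing
    obtain ⟨c, hc, hce⟩ := fm x (x + δ) hR hR2 hR3
    have hcs : c ∈ s := ⟨by linarith [hc.1], by linarith [hc.2]⟩
    obtain ⟨d, hd, hde⟩ := gm x c hR hc.1 (by linarith [hc.2])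
    have hds : d ∈ s := ⟨by linarith [hd.1, hd.2, hc.1, hc.2], by linarith [hd.1, hd.2, hc.1, hc.2]⟩
    have hdpos := hhp d hds
    have hgclt : g x < g c := by nlinarith [hc.1]
    refine ⟨c, hcs, x + δ, ⟨by linarith, by linarith⟩, x, hxs, ?_, ?_⟩
    · rw [abs_of_pos (hgp x hxs), abs_of_pos (hgp c hcs)]; exact hgclt
    · rw [← hce]; ring
  · -- g > 0, h2 < 0 : use left interval, g decreasing
    obtain ⟨c, hc, hce⟩ := fm (x - δ) x hL hL2 hL3
    have hcs : c ∈ s := ⟨by linarith [hc.1], by linarith [hc.2]⟩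
    obtain ⟨d, hd, hde⟩ := gm c x (by linarith [hc.1]) hc.2 hL3
    have hds : d ∈ s := ⟨by linarith [hd.1, hd.2, hc.1, hc.2], by linarith [hd.1, hd.2, hc.1, hc.2]⟩
    have hdneg := hhn d hds
    have hgclt : g x < g c := by nlinarith [hc.2]
    refine ⟨c, hcs, x, hxs, x - δ, ⟨by linarith, by linarith⟩, ?_, ?_⟩
    · rw [abs_of_pos (hgp x hxs), abs_of_pos (hgp c hcs)]; exact hgclt
    · rw [← hce]; ring
  · -- g < 0, h2 > 0 : use left interval, g increasing, so g c < g x < 0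
    obtain ⟨c, hc, hce⟩ := fm (x - δ) x hL hL2 hL3
    have hcs : c ∈ s := ⟨by linarith [hc.1], by linarith [hc.2]⟩
    obtain ⟨d, hd, hde⟩ := gm c x (by linarith [hc.1]) hc.2 hL3
    have hds : d ∈ s := ⟨by linarith [hd.1, hd.2, hc.1, hc.2], by linarith [hd.1, hd.2, hc.1, hc.2]⟩
    have hdpos := hhp d hds
    have hgclt : g c < g x := by nlinarith [hc.2]
    refine ⟨c, hcs, x, hxs, x - δ, ⟨by linarith, by linarith⟩, ?_, ?_⟩
    · rw [abs_of_neg (hgn x hxs), abs_of_neg (hgn c hcs)]; linarith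
    · rw [← hce]; ring
  · -- g < 0, h2 < 0 : use right interval, g decreasing, so g c < g x < 0
    obtain ⟨c, hc, hce⟩ := fm x (x + δ) hR hR2 hR3
    have hcs : c ∈ s := ⟨by linarith [hc.1], by linarith [hc.2]⟩
    obtain ⟨d, hd, hde⟩ := gm x c hR hc.1 (by linarith [hc.2])
    have hds : d ∈ s := ⟨by linarith [hd.1, hd.2, hc.1, hc.2], by linarith [hd.1, hd.2, hc.1, hc.2]⟩
    have hdneg := hhn d hds
    have hgclt : g c < g x := by nlinarith [hc.1]
    refine ⟨c, hcs, x + δ, ⟨by linarith, by linarith⟩, x, hxs, ?_, ?_⟩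
    · rw [abs_of_neg (hgn x hxs), abs_of_neg (hgn c hcs)]; linarith
    · rw [← hce]; ring
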